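/- There exist a sequence (a_n)_{n≥0} of strictly positive real numbers satisfying: (a) a₀ = 1; (b) a_n ≤ a_{n+1} for all n ≥ 0; (c) inf_{n≥0} a_n/a_{n+1} = 0; and (d) lim_{n→∞} a_n^{1/n} = 1. In fact, the sequence defined by a_n := k! whenever k² ≤ n < (k+1)² has all four properties. -/

import Mathlib

open Filter Real

private lemma sqrt_fact_le_pow (n : ℕ) :
    ((Nat.sqrt n).factorial : ℕ) ≤ n ^ (Nat.sqrt n) :=
  le_trans (Nat.factorial_le_pow _)
    (Nat.pow_le_pow_left (Nat.sqrt_le_self n) _)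

/-- There is a sequence `(a_n)` of strictly positive reals with (a) `a₀ = 1`,
(b) `a_n ≤ a_{n+1}`, (c) `inf_n a_n/a_{n+1} = 0`, and (d) `a_n^{1/n} → 1`; in fact
the sequence defined by `a_n = k!` whenever `k² ≤ n < (k+1)²` has all four
properties. -/
theorem stmt_15 :
    ∃ a : ℕ → ℝ,
      (∀ n k : ℕ, k ^ 2 ≤ n → n < (k + 1) ^ 2 → a n = Nat.factorial k) ∧
      (∀ n, 0 < a n) ∧
      a 0 = 1 ∧
      (∀ n, a n ≤ a (n + 1)) ∧
      (⨅ n : ℕ, a n / a (n + 1)) = 0 ∧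
      Filter.Tendsto (fun n : ℕ => a n ^ (1 / (n : ℝ))) Filter.atTop (nhds 1) := by
  refine ⟨fun n => ((Nat.sqrt n).factorial : ℝ), ?_, ?_, ?_, ?_, ?_, ?_⟩
  · intro n k h1 h2
    have h : Nat.sqrt n = k :=
      le_antisymm (Nat.lt_succ_iff.mp (Nat.sqrt_lt'.mpr h2)) (Nat.le_sqrt'.mpr h1)
    show ((Nat.sqrt n).factorial : ℝ) = _
    rw [h]
  · intro n
    show (0:ℝ) < ((Nat.sqrt n).factorial : ℝ)
    exact_mod_cast (Nat.sqrt n).factorial_pos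
  · simp
  · intro n
    show ((Nat.sqrt n).factorial : ℝ) ≤ ((Nat.sqrt (n+1)).factorial : ℝ)
    exact_mod_cast Nat.factorial_le (Nat.sqrt_le_sqrt (Nat.le_succ n))
  · -- infimum is 0
    have hbdd : BddBelow (Set.range fun n : ℕ =>
        (((Nat.sqrt n).factorial : ℝ)) / ((Nat.sqrt (n + 1)).factorial : ℝ)) := by
      refine ⟨0, ?_⟩
      rintro x ⟨n, rfl⟩
      positivity
    have hle : ∀ k : ℕ,
        (⨅ n : ℕ, (((Nat.sqrt n).factorial : ℝ)) / ((Nat.sqrt (n + 1)).factorial : ℝ))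
          ≤ 1 / (k + 1 : ℝ) := by
      intro k
      have key := ciInf_le hbdd ((k + 1) ^ 2 - 1)
      have hkk : (k + 1) ^ 2 = k ^ 2 + 2 * k + 1 := by ring
      have h1 : Nat.sqrt ((k + 1) ^ 2 - 1) = k := by
        apply le_antisymm
        · exact Nat.lt_succ_iff.mp (Nat.sqrt_lt'.mpr (show (k+1)^2 - 1 < (k+1)^2 by omega))
        · exact Nat.le_sqrt'.mpr (by omega)
      have h2 : (k + 1) ^ 2 - 1 + 1 = (k + 1) ^ 2 := by omega
      rw [h1, h2, Nat.sqrt_eq'] at key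
      · calc _ ≤ _ := key
          _ = 1 / (k + 1 : ℝ) := by
            rw [Nat.factorial_succ]
            push_cast
            rw [div_eq_iff (by positivity)]
            field_simp
    have h0 : (0:ℝ) ≤ ⨅ n : ℕ, (((Nat.sqrt n).factorial : ℝ)) / ((Nat.sqrt (n + 1)).factorial : ℝ) :=
      le_ciInf fun n => by positivity
    refine le_antisymm ?_ h0
    exact ge_of_tendsto' tendsto_one_div_add_atTop_nhds_zero_nat hle
  · -- limit is 1
    have hlog : Tendsto (fun n : ℕ => Real.log ((Nat.sqrt n).factorial : ℝ) * (1 / (n : ℝ)))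
        atTop (nhds 0) := by
      have hg : Tendsto (fun x : ℝ => Real.log x / x ^ (1/2 : ℝ)) atTop (nhds 0) :=
        (isLittleO_log_rpow_atTop (by norm_num)).tendsto_div_nhds_zero
      have hgn : Tendsto (fun n : ℕ => Real.log n / (n : ℝ) ^ (1/2 : ℝ)) atTop (nhds 0) :=
        hg.comp tendsto_natCast_atTop_atTop
      refine tendsto_of_tendsto_of_tendsto_of_le_of_le' tendsto_const_nhds hgn ?_ ?_
      · filter_upwards with n
        have h1 : (1:ℝ) ≤ ((Nat.sqrt n).factorial : ℝ) := by
          exact_mod_cast (Nat.sqrt n).factorial_pos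
        positivity
      · filter_upwards [eventually_ge_atTop 1] with n hn
        have hn1 : (1:ℝ) ≤ (n:ℝ) := by exact_mod_cast hn
        have hfle : ((Nat.sqrt n).factorial : ℝ) ≤ (n:ℝ) ^ (Nat.sqrt n) := by
          exact_mod_cast sqrt_fact_le_pow n
        have hlogle : Real.log ((Nat.sqrt n).factorial : ℝ) ≤ (Nat.sqrt n : ℝ) * Real.log n := by
          calc Real.log ((Nat.sqrt n).factorial : ℝ) ≤ Real.log ((n:ℝ) ^ (Nat.sqrt n)) :=
                Real.log_le_log (by exact_mod_cast (Nat.sqrt n).factorial_pos) hfle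
            _ = (Nat.sqrt n : ℝ) * Real.log n := by rw [Real.log_pow]
        have hsq : (Nat.sqrt n : ℝ) ≤ Real.sqrt n := Real.nat_sqrt_le_real_sqrt
        have hlogn : 0 ≤ Real.log n := Real.log_nonneg hn1
        have hnpos : (0:ℝ) < n := by linarith
        calc Real.log ((Nat.sqrt n).factorial : ℝ) * (1 / (n : ℝ))
            ≤ ((Nat.sqrt n : ℝ) * Real.log n) * (1 / (n : ℝ)) := by
              apply mul_le_mul_of_nonneg_right hlogle (by positivity)
          _ ≤ (Real.sqrt n * Real.log n) * (1 / (n : ℝ)) := by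
              apply mul_le_mul_of_nonneg_right
                (mul_le_mul_of_nonneg_right hsq hlogn) (by positivity)
          _ = Real.log n / (n : ℝ) ^ (1/2 : ℝ) := by
              have hh : (n:ℝ)^(1/2:ℝ) * (n:ℝ)^(1/2:ℝ) = (n:ℝ) := by
                rw [← Real.rpow_add hnpos]; norm_num
              have hp : (0:ℝ) < (n:ℝ)^(1/2:ℝ) := Real.rpow_pos_of_pos hnpos _
              rw [Real.sqrt_eq_rpow]
              field_simp
              linear_combination Real.log n * hh
    have hexp : Tendsto (fun n : ℕ =>
        Real.exp (Real.log ((Nat.sqrt n).factorial : ℝ) * (1 / (n : ℝ)))) atTop (nhds 1) := by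
      have := (Real.continuous_exp.tendsto 0).comp hlog
      simpa [Function.comp_def] using this
    refine hexp.congr' ?_
    filter_upwards [eventually_ge_atTop 1] with n hn
    rw [Real.rpow_def_of_pos (by exact_mod_cast (Nat.sqrt n).factorial_pos)]
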